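/- Let L be a finite-dimensional nilpotent Lie algebra over a field of characteristic zero, U its associated unipotent group (identified with L via exp), and consider the exponential map on formal functions. Then for a smooth path x(t) in L, the derivative of exp(x) satisfies d(exp(x)) = ((e^{ad_x} - 1)/ad_x)(dx) · e^x, where (e^{ad_x}-1)/ad_x denotes the finite operator sum Σ_{i≥0} (ad_x)^i/(i+1)! (which terminates since L is nilpotent), and the product on the right is in the universal enveloping algebra. -/
import Mathlib

section PoincareAux

variable {A : Type*} [Ring A]

/-- Homogeneous Poincaré identity with natural-number coefficients:
`Σ_{j<n} x^j dx x^{n-1-j} = Σ_{i<n} C(n, i+1) • (ad_x^i dx) x^{n-1-i}`. -/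
private lemma poincare_star (x dx : A) : ∀ n : ℕ,
    ∑ j ∈ Finset.range n, x ^ j * dx * x ^ (n - 1 - j) =
      ∑ i ∈ Finset.range n,
        (n.choose (i + 1)) • ((fun y => x * y - y * x)^[i] dx * x ^ (n - 1 - i)) := by
  intro n
  induction n with
  | zero => simp
  | succ n ih =>
    set f : ℕ → A := fun i => (fun y => x * y - y * x)^[i] dx with hf
    have hfsucc : ∀ i, f (i + 1) = x * f i - f i * x := by
      intro i
      simp [hf, Function.iterate_succ_apply']
    -- rewrite the LHS as `dx * x^n + x * S n`
    rw [Finset.sum_range_succ']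
    have e1 : ∀ i, x ^ (i + 1) * dx * x ^ (n + 1 - 1 - (i + 1)) =
        x * (x ^ i * dx * x ^ (n - 1 - i)) := by
      intro i
      have hsub : n + 1 - 1 - (i + 1) = n - 1 - i := by omega
      rw [hsub, pow_succ' x i]
      noncomm_ring
    simp only [e1, pow_zero, one_mul, Nat.sub_zero]
    rw [← Finset.mul_sum, ih, Finset.mul_sum]
    have e2 : ∀ i ∈ Finset.range n,
        x * (n.choose (i + 1) • (f i * x ^ (n - 1 - i))) =
          n.choose (i + 1) • (f (i + 1) * x ^ (n - 1 - i)) +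
            n.choose (i + 1) • (f i * x ^ (n - i)) := by
      intro i hi
      rw [Finset.mem_range] at hi
      have hx' : x * x ^ (n - 1 - i) = x ^ (n - i) := by
        rw [← pow_succ']
        congr 1
        omega
      rw [mul_smul_comm, ← smul_add]
      congr 1
      rw [hfsucc, ← hx']
      noncomm_ring
    rw [Finset.sum_congr rfl e2, Finset.sum_add_distrib]
    -- reindex the first sum
    have e3 : ∑ i ∈ Finset.range n, n.choose (i + 1) • (f (i + 1) * x ^ (n - 1 - i)) =
        (∑ i ∈ Finset.range (n + 1), n.choose i • (f i * x ^ (n - i))) - dx * x ^ n := by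
      rw [Finset.sum_range_succ']
      have e3' : ∀ i, n.choose (i + 1) • (f (i + 1) * x ^ (n - (i + 1))) =
          n.choose (i + 1) • (f (i + 1) * x ^ (n - 1 - i)) := by
        intro i
        have hsub : n - (i + 1) = n - 1 - i := by omega
        rw [hsub]
      simp only [e3', Nat.choose_zero_right, one_smul, pow_zero, Nat.sub_zero]
      have hf0 : f 0 = dx := rfl
      rw [hf0]
      abel
    rw [e3]
    have e4 : ∑ i ∈ Finset.range n, n.choose (i + 1) • (f i * x ^ (n - i)) =
        ∑ i ∈ Finset.range (n + 1), n.choose (i + 1) • (f i * x ^ (n - i)) := by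
      rw [Finset.sum_range_succ, Nat.choose_succ_self, zero_smul, add_zero]
    rw [e4]
    have e5 : ∀ i ∈ Finset.range (n + 1),
        ((n + 1).choose (i + 1)) • (f i * x ^ (n + 1 - 1 - i)) =
          n.choose i • (f i * x ^ (n - i)) + n.choose (i + 1) • (f i * x ^ (n - i)) := by
      intro i _
      have hsub : n + 1 - 1 - i = n - i := by omega
      rw [hsub, Nat.choose_succ_succ, add_smul]
    rw [Finset.sum_congr rfl e5, Finset.sum_add_distrib]
    simp only [Nat.add_sub_cancel]
    abel

/-- Vanishing: `x^j (ad_x^i dx) x^m = 0` whenever `i + j + m ≥ 2N+2` and `x^(N+1) = 0`. -/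
private lemma poincare_vanish {N : ℕ} {x : A} (hx : x ^ (N + 1) = 0) (dx : A) :
    ∀ i j m : ℕ, 2 * N + 2 ≤ i + j + m →
      x ^ j * ((fun y => x * y - y * x)^[i] dx) * x ^ m = 0 := by
  have hxz : ∀ j, N + 1 ≤ j → x ^ j = 0 := by
    intro j hj
    calc x ^ j = x ^ (N + 1) * x ^ (j - (N + 1)) := by rw [← pow_add]; congr 1; omega
    _ = 0 := by rw [hx, zero_mul]
  intro i
  induction i with
  | zero =>
    intro j m h
    simp only [Function.iterate_zero, id_eq]
    rcases (by omega : N + 1 ≤ j ∨ N + 1 ≤ m) with h' | h'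
    · rw [hxz j h', zero_mul, zero_mul]
    · rw [hxz m h', mul_zero]
  | succ i ih =>
    intro j m h
    rw [Function.iterate_succ_apply']
    set g : A := (fun y => x * y - y * x)^[i] dx with hg
    have expand : x ^ j * (x * g - g * x) * x ^ m =
        x ^ (j + 1) * g * x ^ m - x ^ j * g * x ^ (m + 1) := by
      rw [pow_succ x j, pow_succ' x m]
      noncomm_ring
    rw [expand, ih (j + 1) m (by omega), ih j (m + 1) (by omega), sub_zero]

end PoincareAux

/-!
STATEMENT 3 (Poincaré's formula for the differential of the exponential).  `L` is an
`N`-nilpotent Lie algebra over a field `K` of characteristic zero, realised inside an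
associative `K`-algebra `A` (e.g. a nilpotent quotient of its universal enveloping algebra),
so that `x ∈ A` satisfies `x^(N+1) = 0` and `ad_x y = x*y - y*x` is nilpotent on the relevant
elements.  The derivative of `exp` at `x` in the direction `dx` is computed via dual numbers
`A[ε] = A ⊕ εA` (`ε² = 0`): the statement
  `exp (x + ε·dx) = exp x + ε · (((e^{ad_x} - 1)/ad_x)(dx) · e^x)`
is exactly Poincaré's formula `d(exp x) = ((e^{ad_x}-1)/ad_x)(dx) · e^x`, where
`(e^{ad_x}-1)/ad_x = Σ_{i≥0} (ad_x)^i/(i+1)!` is a finite sum by nilpotency.  All exponential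
series are truncated at `M = 2N+3`, beyond which all terms vanish.
-/
theorem stmt_3 (K : Type*) [Field K] [CharZero K]
    (A : Type*) [Ring A] [Algebra K A]
    (N : ℕ) (x dx : A) (hx : x ^ (N + 1) = 0) :
    let M := 2 * N + 3
    -- the (truncated) exponential on `A`
    let E : A → A := fun a => ∑ i ∈ Finset.range M, algebraMap K A ((i.factorial : K))⁻¹ * a ^ i
    -- the (truncated) exponential on the dual numbers `A[ε]`
    let ED : DualNumber A → DualNumber A := fun a =>
      ∑ i ∈ Finset.range M,
        (TrivSqZeroExt.inl (algebraMap K A ((i.factorial : K))⁻¹) : DualNumber A) * a ^ i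
    -- `Φ = ((e^{ad_x} - 1)/ad_x)(dx) = Σ_i (ad_x)^i (dx) / (i+1)!`
    let Φ : A := ∑ i ∈ Finset.range M,
      algebraMap K A (((i + 1).factorial : K))⁻¹ * ((fun y => x * y - y * x)^[i] dx)
    ED (TrivSqZeroExt.inl x + TrivSqZeroExt.inr dx) =
      TrivSqZeroExt.inl (E x) + TrivSqZeroExt.inr (Φ * E x) := by
  intro M E ED Φ
  set f : ℕ → A := fun i => (fun y => x * y - y * x)^[i] dx with hf
  -- powers of `inl x + inr dx` in the dual numbers
  have hpow : ∀ n : ℕ,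
      ((TrivSqZeroExt.inl x + TrivSqZeroExt.inr dx : DualNumber A)) ^ n =
        TrivSqZeroExt.inl (x ^ n) +
          TrivSqZeroExt.inr (∑ j ∈ Finset.range n, x ^ j * dx * x ^ (n - 1 - j)) := by
    intro n
    induction n with
    | zero => simp
    | succ n ih =>
      rw [pow_succ, ih]
      refine TrivSqZeroExt.ext ?_ ?_
      · simp [pow_succ]
      · simp only [TrivSqZeroExt.snd_mul, TrivSqZeroExt.snd_add, TrivSqZeroExt.fst_add,
          TrivSqZeroExt.fst_inl, TrivSqZeroExt.fst_inr, TrivSqZeroExt.snd_inl,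
          TrivSqZeroExt.snd_inr, add_zero, zero_add, smul_eq_mul,
          MulOpposite.smul_eq_mul_unop, MulOpposite.unop_op]
        rw [Finset.sum_range_succ, Finset.sum_mul]
        have e1 : ∀ j ∈ Finset.range n,
            x ^ j * dx * x ^ (n - 1 - j) * x = x ^ j * dx * x ^ (n + 1 - 1 - j) := by
          intro j hj
          rw [Finset.mem_range] at hj
          rw [mul_assoc (x ^ j * dx), ← pow_succ]
          congr 2
          omega
        rw [Finset.sum_congr rfl e1]
        have e2 : n + 1 - 1 - n = 0 := by omega
        rw [e2, pow_zero, mul_one, add_comm]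
  -- the coefficient identity
  have hcoef : ∀ n i : ℕ, i < n →
      ((n.factorial : K))⁻¹ * (n.choose (i + 1) : K) =
        (((i + 1).factorial : K))⁻¹ * (((n - 1 - i).factorial : K))⁻¹ := by
    intro n i hi
    have key : n.choose (i + 1) * (i + 1).factorial * (n - (i + 1)).factorial = n.factorial :=
      Nat.choose_mul_factorial_mul_factorial (by omega)
    have key' : (n.choose (i + 1) : K) * ((i + 1).factorial : K) *
        ((n - (i + 1)).factorial : K) = (n.factorial : K) := by
      exact_mod_cast congrArg (Nat.cast : ℕ → K) key
    have h1 : ((n.factorial : K)) ≠ 0 := Nat.cast_ne_zero.mpr n.factorial_ne_zero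
    have h2 : (((i + 1).factorial : K)) ≠ 0 := Nat.cast_ne_zero.mpr (i + 1).factorial_ne_zero
    have h3 : (((n - (i + 1)).factorial : K)) ≠ 0 :=
      Nat.cast_ne_zero.mpr (n - (i + 1)).factorial_ne_zero
    have hsub : n - 1 - i = n - (i + 1) := by omega
    rw [hsub]
    field_simp
    linear_combination key'
  -- the "coefficient times monomial" function
  set g : ℕ × ℕ → A := fun p =>
    ((((p.1 + 1).factorial : K))⁻¹ * (((p.2).factorial : K))⁻¹) • (f p.1 * x ^ p.2) with hgdef
  have hgzero : ∀ p : ℕ × ℕ, 2 * N + 2 ≤ p.1 + p.2 → g p = 0 := by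
    intro p hp
    have : f p.1 * x ^ p.2 = 0 := by
      have := poincare_vanish hx dx p.1 0 p.2 (by omega)
      simpa [hf] using this
    rw [hgdef]
    simp [this]
  refine TrivSqZeroExt.ext ?_ ?_
  · -- first components agree
    simp only [ED, E]
    rw [TrivSqZeroExt.fst_add, TrivSqZeroExt.fst_inl, TrivSqZeroExt.fst_inr, add_zero,
      TrivSqZeroExt.fst_sum]
    refine Finset.sum_congr rfl fun n _ => ?_
    rw [hpow n]
    simp
  · -- second components
    simp only [ED, E, Φ, TrivSqZeroExt.snd_add, TrivSqZeroExt.snd_sum, TrivSqZeroExt.snd_mul,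
      TrivSqZeroExt.fst_inl, TrivSqZeroExt.snd_inl, TrivSqZeroExt.snd_inr,
      TrivSqZeroExt.fst_inr, smul_zero, add_zero, zero_add]
    trans ∑ n ∈ Finset.range M, ∑ i ∈ Finset.range n, g (i, n - 1 - i)
    · refine Finset.sum_congr rfl fun n _ => ?_
      rw [hpow n]
      simp only [TrivSqZeroExt.snd_add, TrivSqZeroExt.snd_inl, TrivSqZeroExt.snd_inr, zero_add,
        smul_eq_mul]
      rw [← Algebra.smul_def, poincare_star x dx n, Finset.smul_sum]
      refine Finset.sum_congr rfl fun i hi => ?_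
      rw [Finset.mem_range] at hi
      rw [← Nat.cast_smul_eq_nsmul K, smul_smul, hcoef n i hi]
    -- right-hand side as a double sum
    have rhs_eq : (∑ i ∈ Finset.range M,
          algebraMap K A (((i + 1).factorial : K))⁻¹ * (fun y => x * y - y * x)^[i] dx) *
        (∑ m ∈ Finset.range M, algebraMap K A ((m.factorial : K))⁻¹ * x ^ m) =
        ∑ p ∈ Finset.range M ×ˢ Finset.range M, g p := by
      rw [Finset.sum_mul_sum, ← Finset.sum_product']
      refine Finset.sum_congr rfl fun p _ => ?_
      rw [← Algebra.smul_def, ← Algebra.smul_def, smul_mul_smul_comm]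
    rw [rhs_eq]
    -- restrict the double sum to the triangle where terms are nonzero
    have filter_eq : ∑ p ∈ Finset.range M ×ˢ Finset.range M, g p =
        ∑ p ∈ (Finset.range M ×ˢ Finset.range M).filter (fun p => p.1 + p.2 + 2 ≤ M), g p := by
      refine (Finset.sum_filter_of_ne ?_).symm
      intro p _ hne
      by_contra hc
      exact hne (hgzero p (by simp only [M] at hc ⊢; omega))
    rw [filter_eq, Finset.sum_sigma']
    refine Finset.sum_nbij' (fun p => (p.2, p.1 - 1 - p.2)) (fun q => ⟨q.1 + q.2 + 1, q.1⟩)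
      ?_ ?_ ?_ ?_ ?_
    · rintro ⟨n, i⟩ ha
      simp only [Finset.mem_sigma, Finset.mem_range] at ha
      simp only [Finset.mem_filter, Finset.mem_product, Finset.mem_range]
      omega
    · rintro ⟨a, b⟩ hb
      simp only [Finset.mem_filter, Finset.mem_product, Finset.mem_range] at hb
      simp only [Finset.mem_sigma, Finset.mem_range]
      omega
    · rintro ⟨n, i⟩ ha
      simp only [Finset.mem_sigma, Finset.mem_range] at ha
      have h1 : i + (n - 1 - i) + 1 = n := by omega
      exact Sigma.ext h1 (by simp)
    · rintro ⟨a, b⟩ hb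
      simp only [Finset.mem_filter, Finset.mem_product, Finset.mem_range] at hb
      have h1 : a + b + 1 - 1 - a = b := by omega
      simp [h1]
    · rintro ⟨n, i⟩ ha
      rfl
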